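/- For every 3-satisfiable CNF formula F with m clauses, there is a truth assignment satisfying at least (2/3)*m clauses. -/

import Mathlib

open Finset
section Aux
variable {V : Type*} [DecidableEq V]

def sig (S : Finset V) (T : V → ℕ) (ω : ↥S → Fin 6) : V → Bool :=
  fun v => if h : v ∈ S then decide ((ω ⟨v, h⟩ : ℕ) < T v) else false

def cnt (k : ℕ) (b : Bool) : ℕ :=
  (univ.filter (fun t : Fin 6 => decide ((t : ℕ) < k) ≠ b)).card

variable (S : Finset V) (T : V → ℕ)

def AC (C : Finset (V × Bool)) (v : ↥S) : Finset (Fin 6) :=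
  univ.filter (fun t => ∀ b : Bool, (v.1, b) ∈ C → decide ((t : ℕ) < T v.1) ≠ b)

lemma fals_eq (C : Finset (V × Bool)) (hC : ∀ l ∈ C, l.1 ∈ S) :
    univ.filter (fun ω : ↥S → Fin 6 => ∀ l ∈ C, sig S T ω l.1 ≠ l.2)
      = Fintype.piFinset (AC S T C) := by
  ext ω
  rw [mem_filter]
  simp only [mem_filter, mem_univ, true_and, Fintype.mem_piFinset, AC, sig]
  constructor
  · intro H v b hb
    have h := H (v.1, b) hb
    simpa [dif_pos v.2] using h
  · intro H l hl
    have h := H ⟨l.1, hC l hl⟩ l.2 hl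
    simpa [dif_pos (hC l hl)] using h

lemma AC_card_le_six (C : Finset (V × Bool)) (v : ↥S) : (AC S T C v).card ≤ 6 := by
  calc (AC S T C v).card ≤ (univ : Finset (Fin 6)).card := card_filter_le _ _
  _ = 6 := by simp

lemma AC_card_le (C : Finset (V × Bool)) (v : ↥S) (b : Bool) (hb : (v.1, b) ∈ C) :
    (AC S T C v).card ≤ cnt (T v.1) b := by
  apply card_le_card
  intro t ht
  simp only [AC, cnt, mem_filter, mem_univ, true_and] at *
  exact ht b hb

lemma prod_part (a : ↥S → ℕ) (h6 : ∀ v, a v ≤ 6) (t : Finset ↥S) :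
    ∏ v, a v ≤ (∏ v ∈ t, a v) * 6 ^ (S.card - t.card) := by
  rw [← Finset.prod_sdiff (subset_univ t), mul_comm]
  apply Nat.mul_le_mul_left
  calc ∏ v ∈ univ \ t, a v ≤ ∏ v ∈ univ \ t, 6 := Finset.prod_le_prod' (fun v _ => h6 v)
  _ = 6 ^ (S.card - t.card) := by
      rw [Finset.prod_const, card_sdiff_of_subset (subset_univ t), card_univ, Fintype.card_coe]

lemma AC_card_zero (C : Finset (V × Bool)) (v : ↥S)
    (h1 : (v.1, true) ∈ C) (h2 : (v.1, false) ∈ C) :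
    (AC S T C v).card = 0 := by
  rw [card_eq_zero]
  ext t
  simp only [AC, mem_filter, mem_univ, true_and, notMem_empty, iff_false]
  intro H
  have ht := H true h1
  have hf := H false h2
  cases hd : decide ((t : ℕ) < T v.1)
  · exact hf (by rw [hd])
  · exact ht (by rw [hd])

lemma clause_bound (C : Finset (V × Bool)) (hCne : C.Nonempty) (hC : ∀ l ∈ C, l.1 ∈ S)
    (hall : ∀ l ∈ C, cnt (T l.1) l.2 ≤ 4)
    (hunit : ∀ l, C = {l} → cnt (T l.1) l.2 ≤ 2)
    (hpair : ∀ l₁ ∈ C, ∀ l₂ ∈ C, l₁.1 ≠ l₂.1 → C.card = 2 →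
      cnt (T l₁.1) l₁.2 ≤ 3 ∨ cnt (T l₂.1) l₂.2 ≤ 3) :
    ∏ v : ↥S, (AC S T C v).card ≤ 2 * 6 ^ (S.card - 1) := by
  set a : ↥S → ℕ := fun v => (AC S T C v).card with ha
  have h6 : ∀ v, a v ≤ 6 := fun v => AC_card_le_six S T C v
  -- distinct literals in C have distinct vars, or product is zero
  by_cases hdup : ∃ v : ↥S, (v.1, true) ∈ C ∧ (v.1, false) ∈ C
  · obtain ⟨v, h1, h2⟩ := hdup
    have : a v = 0 := AC_card_zero S T C v h1 h2
    calc ∏ v : ↥S, a v = 0 := Finset.prod_eq_zero (mem_univ v) this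
    _ ≤ _ := Nat.zero_le _
  push_neg at hdup
  have hvars : ∀ l₁ ∈ C, ∀ l₂ ∈ C, l₁ ≠ l₂ → l₁.1 ≠ l₂.1 := by
    intro l₁ h₁ l₂ h₂ hne heq
    have hb : l₁.2 ≠ l₂.2 := by
      intro hb; exact hne (Prod.ext heq hb)
    have key := hdup ⟨l₁.1, hC l₁ h₁⟩
    have m₁ : (l₁.1, l₁.2) ∈ C := by simpa using h₁
    have m₂ : (l₁.1, l₂.2) ∈ C := by rw [heq]; simpa using h₂
    cases hb1 : l₁.2 <;> cases hb2 : l₂.2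
    · exact hb (hb1.trans hb2.symm)
    · exact key (hb2 ▸ m₂) (hb1 ▸ m₁)
    · exact key (hb1 ▸ m₁) (hb2 ▸ m₂)
    · exact hb (hb1.trans hb2.symm)
  have hcard1 : 1 ≤ C.card := Finset.Nonempty.card_pos hCne
  rcases Nat.lt_or_ge C.card 2 with hc | hc
  · -- unit clause
    have hc1 : C.card = 1 := le_antisymm (by omega) hcard1
    obtain ⟨l, hl⟩ := Finset.card_eq_one.1 hc1
    have hlC : l ∈ C := by rw [hl]; exact mem_singleton_self l
    set v : ↥S := ⟨l.1, hC l hlC⟩ with hv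
    have h1 : a v ≤ 2 := le_trans (AC_card_le S T C v l.2 (by simpa using hlC)) (hunit l hl)
    calc ∏ w : ↥S, a w ≤ (∏ w ∈ ({v} : Finset ↥S), a w) * 6 ^ (S.card - 1) := by
          simpa using prod_part S a h6 {v}
    _ ≤ 2 * 6 ^ (S.card - 1) := by
          rw [Finset.prod_singleton]; exact Nat.mul_le_mul_right _ h1
  rcases Nat.lt_or_ge C.card 3 with hc3 | hc3
  · -- two literals
    have hc2 : C.card = 2 := by omega
    obtain ⟨l₁, l₂, hne, hl⟩ := Finset.card_eq_two.1 hc2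
    have h₁ : l₁ ∈ C := by rw [hl]; simp
    have h₂ : l₂ ∈ C := by rw [hl]; simp
    have hv12 : l₁.1 ≠ l₂.1 := hvars l₁ h₁ l₂ h₂ hne
    set v₁ : ↥S := ⟨l₁.1, hC l₁ h₁⟩ with hv1
    set v₂ : ↥S := ⟨l₂.1, hC l₂ h₂⟩ with hv2
    have hvne : v₁ ≠ v₂ := fun h => hv12 (congrArg Subtype.val h)
    have hb1 : a v₁ ≤ cnt (T l₁.1) l₁.2 := AC_card_le S T C v₁ l₁.2 (by simpa using h₁)
    have hb2 : a v₂ ≤ cnt (T l₂.1) l₂.2 := AC_card_le S T C v₂ l₂.2 (by simpa using h₂)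
    have h12 : a v₁ * a v₂ ≤ 12 := by
      rcases hpair l₁ h₁ l₂ h₂ hv12 hc2 with h | h
      · have := hall l₂ h₂
        calc a v₁ * a v₂ ≤ 3 * 4 := Nat.mul_le_mul (le_trans hb1 h) (le_trans hb2 this)
        _ = 12 := by norm_num
      · have := hall l₁ h₁
        calc a v₁ * a v₂ ≤ 4 * 3 := Nat.mul_le_mul (le_trans hb1 this) (le_trans hb2 h)
        _ = 12 := by norm_num
    have hS2 : 2 ≤ S.card := by
      have : ({v₁, v₂} : Finset ↥S).card ≤ Fintype.card ↥S := by
        rw [← card_univ]; exact card_le_card (subset_univ _)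
      rw [card_pair hvne, Fintype.card_coe] at this
      exact this
    calc ∏ w : ↥S, a w ≤ (∏ w ∈ ({v₁, v₂} : Finset ↥S), a w) * 6 ^ (S.card - 2) := by
          have := prod_part S a h6 {v₁, v₂}
          rwa [card_pair hvne] at this
    _ ≤ 12 * 6 ^ (S.card - 2) := by
          rw [Finset.prod_pair hvne]
          exact Nat.mul_le_mul_right _ h12
    _ ≤ 2 * 6 ^ (S.card - 1) := by
          have : S.card - 1 = (S.card - 2) + 1 := by omega
          rw [this, pow_succ]
          ring_nf
          omega
  · -- three or more literals
    obtain ⟨t, hts, htc⟩ := Finset.exists_subset_card_eq hc3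
    obtain ⟨l₁, l₂, l₃, h12, h13, h23, ht⟩ := Finset.card_eq_three.1 htc
    have h₁ : l₁ ∈ C := hts (by rw [ht]; simp)
    have h₂ : l₂ ∈ C := hts (by rw [ht]; simp)
    have h₃ : l₃ ∈ C := hts (by rw [ht]; simp)
    have hv12 : l₁.1 ≠ l₂.1 := hvars l₁ h₁ l₂ h₂ h12
    have hv13 : l₁.1 ≠ l₃.1 := hvars l₁ h₁ l₃ h₃ h13
    have hv23 : l₂.1 ≠ l₃.1 := hvars l₂ h₂ l₃ h₃ h23
    set v₁ : ↥S := ⟨l₁.1, hC l₁ h₁⟩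
    set v₂ : ↥S := ⟨l₂.1, hC l₂ h₂⟩
    set v₃ : ↥S := ⟨l₃.1, hC l₃ h₃⟩
    have hw12 : v₁ ≠ v₂ := fun h => hv12 (congrArg Subtype.val h)
    have hw13 : v₁ ≠ v₃ := fun h => hv13 (congrArg Subtype.val h)
    have hw23 : v₂ ≠ v₃ := fun h => hv23 (congrArg Subtype.val h)
    have hb1 : a v₁ ≤ 4 := le_trans (AC_card_le S T C v₁ l₁.2 (by simpa using h₁)) (hall l₁ h₁)
    have hb2 : a v₂ ≤ 4 := le_trans (AC_card_le S T C v₂ l₂.2 (by simpa using h₂)) (hall l₂ h₂)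
    have hb3 : a v₃ ≤ 4 := le_trans (AC_card_le S T C v₃ l₃.2 (by simpa using h₃)) (hall l₃ h₃)
    have hcardt : ({v₁, v₂, v₃} : Finset ↥S).card = 3 := by
      rw [card_insert_of_notMem (by simp [hw12, hw13]), card_pair hw23]
    have hprodt : ∏ w ∈ ({v₁, v₂, v₃} : Finset ↥S), a w = a v₁ * (a v₂ * a v₃) := by
      rw [Finset.prod_insert (by simp [hw12, hw13]), Finset.prod_pair hw23]
    have hS3 : 3 ≤ S.card := by
      have : ({v₁, v₂, v₃} : Finset ↥S).card ≤ Fintype.card ↥S := by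
        rw [← card_univ]; exact card_le_card (subset_univ _)
      rw [hcardt, Fintype.card_coe] at this
      exact this
    calc ∏ w : ↥S, a w ≤ (∏ w ∈ ({v₁, v₂, v₃} : Finset ↥S), a w) * 6 ^ (S.card - 3) := by
          have := prod_part S a h6 {v₁, v₂, v₃}
          rwa [hcardt] at this
    _ ≤ 64 * 6 ^ (S.card - 3) := by
          rw [hprodt]
          exact Nat.mul_le_mul_right _
            (le_trans (Nat.mul_le_mul hb1 (Nat.mul_le_mul hb2 hb3)) (by norm_num))
    _ ≤ 2 * 6 ^ (S.card - 1) := by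
          have : S.card - 1 = (S.card - 3) + 2 := by omega
          rw [this, pow_add]
          ring_nf
          nlinarith [(Nat.pow_pos (show 0 < 6 by norm_num) : 0 < 6 ^ (S.card - 3))]

lemma cnt_le4 (k : ℕ) (h2 : 2 ≤ k) (h4 : k ≤ 4) (b : Bool) : cnt k b ≤ 4 := by
  interval_cases k <;> cases b <;> decide

lemma cnt_ge4 (k : ℕ) (h2 : 2 ≤ k) (h4 : k ≤ 4) (b : Bool) (h : ¬ cnt k b ≤ 3) :
    (b = true ∧ k = 2) ∨ (b = false ∧ k = 4) := by
  interval_cases k <;> cases b <;> revert h <;> decide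

def TF (F : List (Finset (V × Bool))) : V → ℕ := fun v =>
  if ({(v, true)} : Finset (V × Bool)) ∈ F then 4
  else if ({(v, false)} : Finset (V × Bool)) ∈ F then 2 else 3

lemma TF_range (F : List (Finset (V × Bool))) (v : V) : 2 ≤ TF F v ∧ TF F v ≤ 4 := by
  unfold TF; split_ifs <;> omega

lemma TF_eq2 (F : List (Finset (V × Bool))) (v : V) (h : TF F v = 2) :
    ({(v, false)} : Finset (V × Bool)) ∈ F := by
  unfold TF at h; split_ifs at h with h1 h2
  · simp at h
  · exact h2
  · simp at h

lemma TF_eq4 (F : List (Finset (V × Bool))) (v : V) (h : TF F v = 4) :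
    ({(v, true)} : Finset (V × Bool)) ∈ F := by
  unfold TF at h; split_ifs at h with h1 h2
  · exact h1
  · simp at h
  · simp at h

def varsOf (F : List (Finset (V × Bool))) : Finset V :=
  F.foldr (fun C s => C.image Prod.fst ∪ s) ∅

lemma mem_varsOf (F : List (Finset (V × Bool))) :
    ∀ C ∈ F, ∀ l ∈ C, l.1 ∈ varsOf F := by
  induction F with
  | nil => simp
  | cons D F ih =>
    intro C hCF l hl
    rcases List.mem_cons.1 hCF with h | h
    · subst h
      exact mem_union_left _ (mem_image_of_mem Prod.fst hl)
    · exact mem_union_right _ (ih C h l hl)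

lemma sat_card (C : Finset (V × Bool)) (hC : ∀ l ∈ C, l.1 ∈ S) (hn : 1 ≤ S.card)
    (hCne : C.Nonempty)
    (hall : ∀ l ∈ C, cnt (T l.1) l.2 ≤ 4)
    (hunit : ∀ l, C = {l} → cnt (T l.1) l.2 ≤ 2)
    (hpair : ∀ l₁ ∈ C, ∀ l₂ ∈ C, l₁.1 ≠ l₂.1 → C.card = 2 →
      cnt (T l₁.1) l₁.2 ≤ 3 ∨ cnt (T l₂.1) l₂.2 ≤ 3) :
    4 * 6 ^ (S.card - 1)
      ≤ (univ.filter (fun ω : ↥S → Fin 6 =>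
          decide (∃ l ∈ C, sig S T ω l.1 = l.2) = true)).card := by
  have hsplit := Finset.card_filter_add_card_filter_not
    (s := (univ : Finset (↥S → Fin 6)))
    (p := fun ω => decide (∃ l ∈ C, sig S T ω l.1 = l.2) = true)
  have hneg : (univ.filter (fun ω : ↥S → Fin 6 =>
      ¬ (decide (∃ l ∈ C, sig S T ω l.1 = l.2) = true)))
      = univ.filter (fun ω : ↥S → Fin 6 => ∀ l ∈ C, sig S T ω l.1 ≠ l.2) := by
    apply filter_congr
    intro ω _
    simp only [decide_eq_true_iff, not_exists, not_and]
  have hfals : (univ.filter (fun ω : ↥S → Fin 6 =>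
      ¬ (decide (∃ l ∈ C, sig S T ω l.1 = l.2) = true))).card ≤ 2 * 6 ^ (S.card - 1) := by
    rw [hneg, fals_eq S T C hC, Fintype.card_piFinset]
    exact clause_bound S T C hCne hC hall hunit hpair
  have hcardΩ : (univ : Finset (↥S → Fin 6)).card = 6 ^ S.card := by
    rw [card_univ, Fintype.card_fun, Fintype.card_fin, Fintype.card_coe]
  have h6n : 6 ^ S.card = 6 ^ (S.card - 1) * 6 := by
    conv_lhs => rw [show S.card = (S.card - 1) + 1 from by omega, pow_succ]
  omega

lemma sum_ge (L : List (Finset (V × Bool))) (M : ℕ)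
    (hL : ∀ C ∈ L, M ≤ (univ.filter (fun ω : ↥S → Fin 6 =>
        decide (∃ l ∈ C, sig S T ω l.1 = l.2) = true)).card) :
    M * L.length ≤ ∑ ω : ↥S → Fin 6,
        L.countP (fun C => decide (∃ l ∈ C, sig S T ω l.1 = l.2)) := by
  induction L with
  | nil => simp
  | cons C L ih =>
    simp only [List.countP_cons, List.length_cons]
    rw [Finset.sum_add_distrib]
    have h1 := ih (fun D h => hL D (List.mem_cons_of_mem _ h))
    have h2 : M ≤ ∑ ω : ↥S → Fin 6,
        if (decide (∃ l ∈ C, sig S T ω l.1 = l.2) : Bool) = true then 1 else 0 := by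
      rw [Finset.sum_boole]
      simpa using hL C (List.mem_cons_self)
    calc M * (L.length + 1) = M * L.length + M := by ring
    _ ≤ _ := Nat.add_le_add h1 h2

end Aux

theorem stmt8 {V : Type*} (F : List (Finset (V × Bool)))
    (hne : ∀ C ∈ F, C.Nonempty)
    (h3sat : ∀ C₁ ∈ F, ∀ C₂ ∈ F, ∀ C₃ ∈ F, ∃ σ : V → Bool,
      (∃ l ∈ C₁, σ l.1 = l.2) ∧ (∃ l ∈ C₂, σ l.1 = l.2) ∧ (∃ l ∈ C₃, σ l.1 = l.2)) :
    ∃ σ : V → Bool,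
      (2 / 3 : ℝ) * F.length
        ≤ (F.countP (fun C => decide (∃ l ∈ C, σ l.1 = l.2)) : ℝ) := by
  classical
  rcases eq_or_ne F [] with rfl | hF
  · exact ⟨fun _ => false, by simp⟩
  obtain ⟨C₀, hC₀⟩ := List.exists_mem_of_ne_nil F hF
  set S := varsOf F with hS
  set T := TF F with hT
  have hSmem : ∀ C ∈ F, ∀ l ∈ C, l.1 ∈ S := mem_varsOf F
  have hn : 1 ≤ S.card := by
    obtain ⟨l, hl⟩ := hne C₀ hC₀
    exact Finset.card_pos.2 ⟨l.1, hSmem C₀ hC₀ l hl⟩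
  have hnotboth : ∀ v : V, ¬ (({(v, true)} : Finset (V × Bool)) ∈ F ∧
      ({(v, false)} : Finset (V × Bool)) ∈ F) := by
    rintro v ⟨h1, h2⟩
    obtain ⟨σ, hs1, hs2, -⟩ := h3sat _ h1 _ h2 _ h2
    simp only [Finset.mem_singleton, exists_eq_left] at hs1 hs2
    simp [hs1] at hs2
  have hsat : ∀ C ∈ F, 4 * 6 ^ (S.card - 1)
      ≤ (Finset.univ.filter (fun ω : ↥S → Fin 6 =>
          decide (∃ l ∈ C, sig S T ω l.1 = l.2) = true)).card := by
    intro C hCF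
    apply sat_card S T C (hSmem C hCF) hn (hne C hCF)
    · intro l _
      exact cnt_le4 _ (TF_range F l.1).1 (TF_range F l.1).2 _
    · intro l hl
      have hmemF : ({l} : Finset (V × Bool)) ∈ F := hl ▸ hCF
      cases hb : l.2
      · have hmem : ({(l.1, false)} : Finset (V × Bool)) ∈ F := by
          have : ({(l.1, l.2)} : Finset (V × Bool)) ∈ F := by simpa using hmemF
          rwa [hb] at this
        have hnt : ({(l.1, true)} : Finset (V × Bool)) ∉ F :=
          fun h => hnotboth l.1 ⟨h, hmem⟩
        have hT2 : T l.1 = 2 := by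
          rw [hT]; unfold TF; rw [if_neg hnt, if_pos hmem]
        rw [hT2]; decide
      · have hmem : ({(l.1, true)} : Finset (V × Bool)) ∈ F := by
          have : ({(l.1, l.2)} : Finset (V × Bool)) ∈ F := by simpa using hmemF
          rwa [hb] at this
        have hT4 : T l.1 = 4 := by
          rw [hT]; unfold TF; rw [if_pos hmem]
        rw [hT4]; decide
    · intro l₁ h₁ l₂ h₂ hv hc2
      by_contra hcon
      push_neg at hcon
      obtain ⟨hc1, hc2'⟩ := hcon
      have r1 := TF_range F l₁.1
      have r2 := TF_range F l₂.1
      have k1 := cnt_ge4 (T l₁.1) r1.1 r1.2 l₁.2 (by omega)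
      have k2 := cnt_ge4 (T l₂.1) r2.1 r2.2 l₂.2 (by omega)
      have u1 : ({(l₁.1, !l₁.2)} : Finset (V × Bool)) ∈ F := by
        rcases k1 with ⟨hb, hk⟩ | ⟨hb, hk⟩
        · rw [hb]; simpa using TF_eq2 F _ hk
        · rw [hb]; simpa using TF_eq4 F _ hk
      have u2 : ({(l₂.1, !l₂.2)} : Finset (V × Bool)) ∈ F := by
        rcases k2 with ⟨hb, hk⟩ | ⟨hb, hk⟩
        · rw [hb]; simpa using TF_eq2 F _ hk
        · rw [hb]; simpa using TF_eq4 F _ hk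
      have hl12 : l₁ ≠ l₂ := fun h => hv (congrArg Prod.fst h)
      have hCeq : C = {l₁, l₂} := by
        refine (Finset.eq_of_subset_of_card_le ?_ ?_).symm
        · intro x hx
          rcases Finset.mem_insert.1 hx with rfl | hx
          · exact h₁
          · rwa [Finset.mem_singleton.1 hx]
        · rw [hc2, Finset.card_pair hl12]
      obtain ⟨σ, s1, s2, s3⟩ := h3sat _ u1 _ u2 _ hCF
      simp only [Finset.mem_singleton, exists_eq_left] at s1 s2
      obtain ⟨l, hlC, hls⟩ := s3
      rw [hCeq] at hlC
      rcases Finset.mem_insert.1 hlC with rfl | hl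
      · simp [s1] at hls
      · rw [Finset.mem_singleton.1 hl] at hls
        simp [s2] at hls
  have hΩcard : (Finset.univ : Finset (↥S → Fin 6)).card = 6 ^ S.card := by
    rw [Finset.card_univ, Fintype.card_fun, Fintype.card_fin, Fintype.card_coe]
  have hsum := sum_ge S T F (4 * 6 ^ (S.card - 1)) hsat
  have hex : ∃ ω : ↥S → Fin 6,
      2 * F.length ≤ 3 * F.countP (fun C => decide (∃ l ∈ C, sig S T ω l.1 = l.2)) := by
    have hne' : (Finset.univ : Finset (↥S → Fin 6)).Nonempty := Finset.univ_nonempty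
    have hsumle : ∑ _ω : ↥S → Fin 6, 2 * F.length
        ≤ ∑ ω : ↥S → Fin 6,
            3 * F.countP (fun C => decide (∃ l ∈ C, sig S T ω l.1 = l.2)) := by
      rw [Finset.sum_const, hΩcard, ← Finset.mul_sum]
      have h6n : 6 ^ S.card = 6 ^ (S.card - 1) * 6 := by
        conv_lhs => rw [show S.card = (S.card - 1) + 1 from by omega, pow_succ]
      calc (6 ^ S.card) • (2 * F.length)
          = 6 ^ S.card * (2 * F.length) := smul_eq_mul ..
        _ = 3 * (4 * 6 ^ (S.card - 1) * F.length) := by rw [h6n]; ring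
        _ ≤ 3 * ∑ ω : ↥S → Fin 6,
            F.countP (fun C => decide (∃ l ∈ C, sig S T ω l.1 = l.2)) :=
            Nat.mul_le_mul_left 3 hsum
    obtain ⟨ω, -, hω⟩ := Finset.exists_le_of_sum_le hne' hsumle
    exact ⟨ω, hω⟩
  obtain ⟨ω, hω⟩ := hex
  refine ⟨sig S T ω, ?_⟩
  rw [div_mul_eq_mul_div, div_le_iff₀ (by norm_num : (0:ℝ) < 3)]
  have : ((2 * F.length : ℕ) : ℝ) ≤ ((3 * F.countP
      (fun C => decide (∃ l ∈ C, sig S T ω l.1 = l.2)) : ℕ) : ℝ) := by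
    exact_mod_cast hω
  push_cast at this ⊢
  linarith
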